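/- Let (a_n) be a sequence of positive reals with lim_{n→∞} a_{n+1}/a_n = 0, and let J = SA + AS* be the associated Jacobi operator on ℓ²(ℕ) with positive eigenvalues λ_1 > λ_2 > ... (decreasing to 0). Then for every ε ∈ (0, 1/8) there exists n₀ such that λ_n ≤ (1 + ε)·a_{2n-1} for all n > n₀. -/

import Mathlib

open Filter ContinuousLinearMap

/-- ℓ²(ℕ), with 0-based indexing of coordinates. -/
noncomputable abbrev H2 : Type := lp (fun _ : ℕ => ℂ) 2

/-- The standard basis vectors of ℓ²(ℕ): `e n` corresponds to the paper's e_{n+1}. -/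
noncomputable def e (n : ℕ) : H2 := lp.single 2 n 1

set_option maxHeartbeats 2000000
set_option synthInstance.maxHeartbeats 400000

local notation "⟪" x ", " y "⟫" => @inner ℂ _ _ x y

lemma e_apply (n k : ℕ) : (e n) k = if k = n then 1 else 0 := by
  simp [e, lp.single_apply, Pi.single_apply]

lemma coord_eq_inner (f : H2) (k : ℕ) : ⟪e k, f⟫ = f k := by
  simp [e, lp.inner_single_left]

lemma orthonormal_e : Orthonormal ℂ e := by
  rw [orthonormal_iff_ite]
  intro i j
  rw [coord_eq_inner, e_apply]

lemma dense_span_e : Dense (Submodule.span ℂ (Set.range e) : Set H2) := by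
  intro f
  have h := lp.hasSum_single ENNReal.ofNat_ne_top f
  refine mem_closure_of_tendsto h.tendsto_sum_nat (Filter.Eventually.of_forall ?_)
  intro s
  refine Submodule.sum_mem _ fun i _ => ?_
  have : lp.single (E := fun _ : ℕ => ℂ) 2 i (f i) = f i • e i := by
    apply lp.ext
    ext k
    by_cases h : k = i
    · subst h; simp [lp.single_apply, e_apply, lp.coeFn_smul]
    · simp [lp.single_apply, e_apply, h, lp.coeFn_smul]
  rw [this]
  exact Submodule.smul_mem _ _ (Submodule.subset_span ⟨i, rfl⟩)

lemma clm_ext_e {F : Type*} [NormedAddCommGroup F] [NormedSpace ℂ F]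
    {T U : H2 →L[ℂ] F} (h : ∀ n, T (e n) = U (e n)) : T = U :=
  ContinuousLinearMap.ext_on dense_span_e (by rintro x ⟨n, rfl⟩; exact h n)

lemma summable_sq (f : H2) : Summable (fun k => ‖f k‖ ^ 2) := by
  have := Memℓp.summable (p := 2) (by norm_num) (lp.memℓp f)
  simpa [ENNReal.toReal_ofNat, Real.rpow_natCast] using this

lemma norm_sq_eq_tsum (f : H2) : ‖f‖ ^ 2 = ∑' k, ‖f k‖ ^ 2 := by
  have := lp.norm_rpow_eq_tsum (p := 2) (by norm_num) f
  simpa [ENNReal.toReal_ofNat, Real.rpow_natCast] using this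

lemma norm_le_of_coord {f g : H2} {c : ℝ} (hc : 0 ≤ c) (σ : ℕ → ℕ)
    (hσ : Function.Injective σ) (h : ∀ k, ‖f k‖ ≤ c * ‖g (σ k)‖) : ‖f‖ ≤ c * ‖g‖ := by
  have h1 : ‖f‖ ^ 2 ≤ (c * ‖g‖) ^ 2 := by
    rw [norm_sq_eq_tsum, mul_pow, norm_sq_eq_tsum, ← tsum_mul_left]
    have hsum : Summable (fun k => c ^ 2 * ‖g k‖ ^ 2) := (summable_sq g).mul_left _
    calc ∑' k, ‖f k‖ ^ 2 ≤ ∑' k, ((fun j => c ^ 2 * ‖g j‖ ^ 2) ∘ σ) k := by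
          refine Summable.tsum_le_tsum (fun k => ?_) (summable_sq f) (hsum.comp_injective hσ)
          have hk := h k
          have := norm_nonneg (f k)
          simp only [Function.comp_apply, ← mul_pow]
          nlinarith
      _ ≤ ∑' k, c ^ 2 * ‖g k‖ ^ 2 :=
          tsum_comp_le_tsum_of_inj hsum (fun k => by positivity) hσ
  nlinarith [norm_nonneg f, mul_nonneg hc (norm_nonneg g), norm_nonneg g]

/-- Upper bound (inequality (2.5)): for every ε ∈ (0, 1/8) there is n₀ such that
the positive eigenvalues of the Jacobi operator J = SA + AS* satisfy
λ_n ≤ (1 + ε)·a_{2n-1} for all n > n₀ (0-indexed: lam n is the paper's λ_{n+1}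
and a (2n) the paper's a_{2(n+1)-1}). -/
theorem jacobi_eigenvalue_upper_bound (a : ℕ → ℝ) (hpos : ∀ n, 0 < a n)
    (hratio : Tendsto (fun n => a (n + 1) / a n) atTop (nhds 0))
    (S A : H2 →L[ℂ] H2)
    (hS : ∀ n, S (e n) = e (n + 1))
    (hA : ∀ n, A (e n) = (a n : ℂ) • e n)
    (lam : ℕ → ℝ) (hlpos : ∀ n, 0 < lam n) (hstrict : StrictAnti lam)
    (htend : Tendsto lam atTop (nhds 0))
    (hchar : ∀ μ : ℂ,
      Module.End.HasEigenvalue ((S ∘L A + A ∘L adjoint S : H2 →L[ℂ] H2) : H2 →ₗ[ℂ] H2) μ ↔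
      ∃ n, μ = lam n ∨ μ = -lam n) :
    ∀ ε : ℝ, 0 < ε → ε < 1 / 8 →
      ∃ n₀ : ℕ, ∀ n, n₀ < n → lam n ≤ (1 + ε) * a (2 * n) := by
  classical
  set J : H2 →L[ℂ] H2 := S ∘L A + A ∘L adjoint S with hJdef
  -- coordinates of A
  have coordA : ∀ (y : H2) (k : ℕ), (A y) k = (a k : ℂ) * y k := by
    intro y k
    have hext : (innerSL ℂ (e k)).comp A = ContinuousLinearMap.comp ((a k : ℂ) • ContinuousLinearMap.id ℂ ℂ) (innerSL ℂ (e k)) := by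
      apply clm_ext_e
      intro j
      simp only [ContinuousLinearMap.comp_apply, ContinuousLinearMap.smul_apply,
        innerSL_apply_apply, hA, inner_smul_right, smul_eq_mul]
      rw [coord_eq_inner, e_apply]
      rcases eq_or_ne k j with rfl | h
      · simp
      · simp [h]
    have := congrArg (fun T => T y) hext
    simpa [coord_eq_inner] using this
  -- coordinates of adjoint S
  have coordS : ∀ (y : H2) (k : ℕ), ((adjoint S) y) k = y (k + 1) := by
    intro y k
    rw [← coord_eq_inner, ContinuousLinearMap.adjoint_inner_right, hS, coord_eq_inner]
  -- adjoint S ∘ S = id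
  have hSdS : ∀ y : H2, (adjoint S) (S y) = y := by
    have hext : (adjoint S) ∘L S = ContinuousLinearMap.id ℂ H2 := by
      apply clm_ext_e
      intro j
      apply lp.ext
      funext k
      simp only [ContinuousLinearMap.comp_apply, ContinuousLinearMap.id_apply, hS]
      rw [coordS, e_apply, e_apply]
      simp
    intro y
    exact congrArg (fun T => T y) hext
  -- S is an isometry
  have hSisom : ∀ y : H2, ‖S y‖ = ‖y‖ := by
    intro y
    have h1 : ⟪S y, S y⟫ = ⟪y, y⟫ := by
      rw [← ContinuousLinearMap.adjoint_inner_left, hSdS]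
    have h2 : ‖S y‖ ^ 2 = ‖y‖ ^ 2 := by
      rw [← inner_self_eq_norm_sq (𝕜 := ℂ), ← inner_self_eq_norm_sq (𝕜 := ℂ), h1]
    nlinarith [norm_nonneg (S y), norm_nonneg y]
  -- A is symmetric
  have hAsym : ∀ y z : H2, ⟪A y, z⟫ = ⟪y, A z⟫ := by
    intro y z
    have h1 := lp.hasSum_inner (𝕜 := ℂ) (A y) z
    have h2 := lp.hasSum_inner (𝕜 := ℂ) y (A z)
    refine h1.unique ?_
    convert h2 using 2 with i
    rw [RCLike.inner_apply, RCLike.inner_apply, coordA, coordA, map_mul, Complex.conj_ofReal]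
    ring
  -- J is symmetric
  have hJsym : ∀ y z : H2, ⟪J y, z⟫ = ⟪y, J z⟫ := by
    intro y z
    have t1 : ⟪S (A y), z⟫ = ⟪y, A ((adjoint S) z)⟫ := by
      rw [← ContinuousLinearMap.adjoint_inner_right, hAsym]
    have t2 : ⟪A ((adjoint S) y), z⟫ = ⟪y, S (A z)⟫ := by
      rw [hAsym, ContinuousLinearMap.adjoint_inner_left]
    simp only [hJdef, ContinuousLinearMap.add_apply, ContinuousLinearMap.comp_apply,
      inner_add_left, inner_add_right, t1, t2]
    ring
  intro ε hε hε8
  -- ratio bound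
  obtain ⟨N, hN⟩ : ∃ N, ∀ m, N ≤ m → a (m + 1) < min ε 1 * a m := by
    have hmin : (0 : ℝ) < min ε 1 := lt_min hε one_pos
    have h := hratio.eventually (gt_mem_nhds hmin)
    rw [eventually_atTop] at h
    obtain ⟨N, hN⟩ := h
    exact ⟨N, fun m hm => (div_lt_iff₀ (hpos m)).mp (hN m hm)⟩
  have hdec : ∀ m, N ≤ m → ∀ k, m ≤ k → a k ≤ a m := by
    intro m hm k hk
    induction k, hk using Nat.le_induction with
    | base => exact le_refl _
    | succ k hk ih =>
        have h1 := hN k (le_trans hm hk)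
        have h2 : min ε 1 * a k ≤ a k := by
          nlinarith [hpos k, min_le_right ε 1, lt_min hε one_pos]
        exact le_trans (le_trans h1.le h2) ih
  refine ⟨N, fun n hn => ?_⟩
  have hN2n : N ≤ 2 * n := by omega
  have hN2n1 : N ≤ 2 * n + 1 := by omega
  -- eigenvectors
  set μ : Fin (n + 1) × Bool → ℝ := fun i => if i.2 then lam i.1 else -lam i.1 with hμdef
  have hev : ∀ i : Fin (n + 1) × Bool, ∃ v : H2, J v = ((μ i : ℝ) : ℂ) • v ∧ v ≠ 0 := by
    intro i
    have h : Module.End.HasEigenvalue ((J : H2 →L[ℂ] H2) : H2 →ₗ[ℂ] H2) ((μ i : ℝ) : ℂ) := by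
      refine (hchar _).mpr ⟨i.1, ?_⟩
      rcases i with ⟨i1, i2⟩
      cases i2
      · right; simp [hμdef]
      · left; simp [hμdef]
    obtain ⟨v0, hv0⟩ := h.exists_hasEigenvector
    exact ⟨v0, hv0.apply_eq_smul, hv0.right⟩
  have hev' : ∀ i : Fin (n + 1) × Bool,
      ∃ v : H2, J v = ((μ i : ℝ) : ℂ) • v ∧ ‖v‖ = 1 := by
    intro i
    obtain ⟨v0, hv0, hne⟩ := hev i
    refine ⟨((‖v0‖ : ℂ))⁻¹ • v0, ?_, norm_smul_inv_norm hne⟩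
    rw [map_smul, hv0, smul_comm]
  choose v hvJ hvnorm using hev'
  -- injectivity of μ
  have hμinj : Function.Injective μ := by
    rintro ⟨i1, i2⟩ ⟨j1, j2⟩ hij
    have hip := hlpos i1
    have hjp := hlpos j1
    cases i2 <;> cases j2 <;> simp only [hμdef, Bool.false_eq_true, if_false, if_true] at hij
    · have h : (i1 : ℕ) = (j1 : ℕ) := hstrict.injective (by linarith)
      exact Prod.ext_iff.mpr ⟨Fin.ext h, rfl⟩
    · exfalso; linarith
    · exfalso; linarith
    · have h : (i1 : ℕ) = (j1 : ℕ) := hstrict.injective hij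
      exact Prod.ext_iff.mpr ⟨Fin.ext h, rfl⟩
  -- orthonormality
  have horth : Orthonormal ℂ v := by
    refine ⟨hvnorm, ?_⟩
    intro i j hij
    have h1 : ⟪J (v i), v j⟫ = ⟪v i, J (v j)⟫ := hJsym _ _
    rw [hvJ i, hvJ j, inner_smul_left, inner_smul_right, Complex.conj_ofReal] at h1
    have h2 : (((μ i : ℝ) : ℂ) - ((μ j : ℝ) : ℂ)) * ⟪v i, v j⟫ = 0 := by
      linear_combination h1
    rcases mul_eq_zero.mp h2 with h3 | h3
    · exfalso
      apply hij
      apply hμinj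
      have : ((μ i : ℝ) : ℂ) = ((μ j : ℝ) : ℂ) := by linear_combination h3
      exact_mod_cast this
    · exact h3
  -- span of eigenvectors and dimension count
  have hli := horth.linearIndependent
  haveI hfin : FiniteDimensional ℂ (Submodule.span ℂ (Set.range v)) :=
    FiniteDimensional.span_of_finite ℂ (Set.finite_range v)
  have hrank : Module.finrank ℂ (Submodule.span ℂ (Set.range v)) = 2 * n + 2 := by
    rw [finrank_span_eq_card hli]
    simp [Fintype.card_prod]
    ring
  set φ : H2 →ₗ[ℂ] (Fin (2 * n + 1) → ℂ) :=
    LinearMap.pi (fun k => ((innerSL ℂ (e (k : ℕ))).toLinearMap)) with hφdef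
  have hnotinj : ¬ Function.Injective
      (φ.comp (Submodule.span ℂ (Set.range v)).subtype) := by
    intro hinj
    have hle := LinearMap.finrank_le_finrank_of_injective hinj
    rw [hrank, Module.finrank_fintype_fun_eq_card] at hle
    simp only [Fintype.card_fin] at hle
    omega
  rw [Function.not_injective_iff] at hnotinj
  obtain ⟨x1, x2, hx12, hxne⟩ := hnotinj
  set u : Submodule.span ℂ (Set.range v) := x1 - x2 with hudef
  have hu0 : (φ.comp (Submodule.span ℂ (Set.range v)).subtype) u = 0 := by
    rw [hudef, map_sub, hx12, sub_self]
  have hune : u ≠ 0 := sub_ne_zero.mpr hxne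
  set xv : H2 := (u : H2) with hxvdef
  have hxvne : xv ≠ 0 := fun h => hune (Submodule.coe_eq_zero.mp h)
  have hxcoord : ∀ k, k ≤ 2 * n → xv k = 0 := by
    intro k hk
    have h1 := congrFun hu0 (⟨k, by omega⟩ : Fin (2 * n + 1))
    rw [← coord_eq_inner xv k]
    simpa [hφdef, LinearMap.pi_apply] using h1
  have hmem : xv ∈ Submodule.span ℂ (Set.range v) := u.2
  obtain ⟨c, hc⟩ := (Submodule.mem_span_range_iff_exists_fun ℂ).mp hmem
  -- norms of linear combinations of the orthonormal family
  have hsum_sq : ∀ d : (Fin (n + 1) × Bool) → ℂ,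
      ‖∑ i, d i • v i‖ ^ 2 = ∑ i, ‖d i‖ ^ 2 := by
    intro d
    have h1 : (⟪∑ i, d i • v i, ∑ i, d i • v i⟫ : ℂ) =
        ∑ i, (starRingEnd ℂ) (d i) * d i := horth.inner_sum d d Finset.univ
    have h2 := inner_self_eq_norm_sq (𝕜 := ℂ) (∑ i, d i • v i)
    rw [h1] at h2
    rw [← h2, map_sum]
    refine Finset.sum_congr rfl fun i _ => ?_
    rw [RCLike.conj_mul]
    rw [← RCLike.ofReal_pow, RCLike.ofReal_re]
  have hxnorm_sq : ‖xv‖ ^ 2 = ∑ i, ‖c i‖ ^ 2 := by rw [← hc]; exact hsum_sq c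
  have hJx : J xv = ∑ i, (c i * ((μ i : ℝ) : ℂ)) • v i := by
    rw [← hc, map_sum]
    refine Finset.sum_congr rfl fun i _ => ?_
    rw [map_smul, hvJ, smul_smul]
  have hJnorm_sq : ‖J xv‖ ^ 2 = ∑ i, ‖c i * ((μ i : ℝ) : ℂ)‖ ^ 2 := by
    rw [hJx]; exact hsum_sq _
  -- lower bound for ‖J xv‖
  have hlow : lam n * ‖xv‖ ≤ ‖J xv‖ := by
    have h1 : (lam n) ^ 2 * ‖xv‖ ^ 2 ≤ ‖J xv‖ ^ 2 := by
      rw [hxnorm_sq, hJnorm_sq, Finset.mul_sum]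
      refine Finset.sum_le_sum fun i _ => ?_
      have hμabs : ‖((μ i : ℝ) : ℂ)‖ = |μ i| := by
        rw [Complex.norm_real, Real.norm_eq_abs]
      have habs : lam n ≤ |μ i| := by
        have hle : (i.1 : ℕ) ≤ n := Nat.lt_succ_iff.mp i.1.2
        have h3 : lam n ≤ lam (i.1 : ℕ) := hstrict.antitone hle
        rcases i with ⟨i1, i2⟩
        cases i2
        · simp only [hμdef, Bool.false_eq_true, if_false]
          rw [abs_neg, abs_of_pos (hlpos _)]
          exact h3
        · simp only [hμdef, if_true]
          rw [abs_of_pos (hlpos _)]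
          exact h3
      rw [norm_mul, hμabs, mul_pow]
      have h5 : lam n ^ 2 ≤ |μ i| ^ 2 := by nlinarith [hlpos n]
      calc lam n ^ 2 * ‖c i‖ ^ 2 ≤ |μ i| ^ 2 * ‖c i‖ ^ 2 :=
            mul_le_mul_of_nonneg_right h5 (sq_nonneg _)
        _ = ‖c i‖ ^ 2 * |μ i| ^ 2 := by ring
    nlinarith [norm_nonneg (J xv), norm_nonneg xv,
      mul_nonneg (hlpos n).le (norm_nonneg xv)]
  -- upper bounds
  have hup1 : ‖A xv‖ ≤ a (2 * n + 1) * ‖xv‖ := by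
    refine norm_le_of_coord (hpos _).le id (fun _ _ h => h) fun k => ?_
    rw [coordA]
    rcases le_or_gt k (2 * n) with hk | hk
    · rw [hxcoord k hk]
      simp
      exact mul_nonneg (hpos _).le (norm_nonneg _)
    · rw [norm_mul]
      have h1 : ‖((a k : ℝ) : ℂ)‖ = a k := by
        rw [Complex.norm_real, Real.norm_eq_abs, abs_of_pos (hpos k)]
      rw [h1]
      exact mul_le_mul_of_nonneg_right (hdec (2 * n + 1) hN2n1 k (by omega))
        (norm_nonneg _)
  have hup2 : ‖A ((adjoint S) xv)‖ ≤ a (2 * n) * ‖xv‖ := by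
    refine norm_le_of_coord (hpos _).le (fun k => k + 1)
      (add_left_injective 1) fun k => ?_
    rw [coordA, coordS]
    rcases le_or_gt (k + 1) (2 * n) with hk | hk
    · rw [hxcoord _ hk]
      simp
    · rw [norm_mul]
      have h1 : ‖((a k : ℝ) : ℂ)‖ = a k := by
        rw [Complex.norm_real, Real.norm_eq_abs, abs_of_pos (hpos k)]
      rw [h1]
      exact mul_le_mul_of_nonneg_right (hdec (2 * n) hN2n k (by omega))
        (norm_nonneg _)
  have hupper : ‖J xv‖ ≤ (a (2 * n + 1) + a (2 * n)) * ‖xv‖ := by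
    have hsplit : J xv = S (A xv) + A ((adjoint S) xv) := rfl
    calc ‖J xv‖ = ‖S (A xv) + A ((adjoint S) xv)‖ := by rw [hsplit]
      _ ≤ ‖S (A xv)‖ + ‖A ((adjoint S) xv)‖ := norm_add_le _ _
      _ = ‖A xv‖ + ‖A ((adjoint S) xv)‖ := by rw [hSisom]
      _ ≤ a (2 * n + 1) * ‖xv‖ + a (2 * n) * ‖xv‖ := add_le_add hup1 hup2
      _ = (a (2 * n + 1) + a (2 * n)) * ‖xv‖ := by ring
  have hrat : a (2 * n + 1) ≤ ε * a (2 * n) := by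
    have h1 := hN (2 * n) hN2n
    have h2 : min ε 1 ≤ ε := min_le_left _ _
    nlinarith [hpos (2 * n)]
  have hxpos : 0 < ‖xv‖ := norm_pos_iff.mpr hxvne
  have hfinal : lam n * ‖xv‖ ≤ ((1 + ε) * a (2 * n)) * ‖xv‖ := by
    refine le_trans hlow (le_trans hupper ?_)
    have h3 : a (2 * n + 1) + a (2 * n) ≤ (1 + ε) * a (2 * n) := by nlinarith
    exact mul_le_mul_of_nonneg_right h3 (norm_nonneg _)
  exact le_of_mul_le_mul_right hfinal hxpos
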